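/- Let D be an integral domain, V a valuation overring of D, and suppose V is integral over a subring of the form D[x_1,...,x_n]_M localized at a maximal ideal M, with x_1,...,x_n in the fraction field of D. Then for every prime ideal P of D, there are at most two prime ideals of V lying over P. -/

import Mathlib

open Ideal

universe u_aux

/-- A Noetherian module killed by a power of a maximal ideal is Artinian. -/
lemma artinianAux {R : Type*} [CommRing R] {m : Ideal R} (hm : m.IsMaximal) :
    ∀ (k : ℕ) (M : Type u_aux) [AddCommGroup M] [Module R M] [IsNoetherian R M],
      (m ^ k • (⊤ : Submodule R M) = ⊥) → IsArtinian R M := by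
  intro k
  induction k with
  | zero =>
    intro M _ _ _ h
    rw [pow_zero, Ideal.one_eq_top, Submodule.top_smul] at h
    have hs : Subsingleton M := by
      refine subsingleton_of_forall_eq 0 fun x => ?_
      have : x ∈ (⊤ : Submodule R M) := trivial
      rw [h] at this
      simpa using this
    haveI := hs
    infer_instance
  | succ k ih =>
    intro M _ _ _ h
    -- N := m • ⊤
    set N : Submodule R M := m • ⊤ with hN
    -- N is Artinian by induction
    have hNa : IsArtinian R N := by
      refine ih N ?_
      have hinj : Function.Injective N.subtype := Subtype.val_injective
      apply Submodule.map_injective_of_injective hinj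
      rw [Submodule.map_smul'', Submodule.map_bot, Submodule.map_top, Submodule.range_subtype]
      rw [hN, ← Submodule.smul_assoc, Ideal.smul_eq_mul, ← pow_succ]
      exact h
    -- M ⧸ N is Artinian via the residue field
    have htor : Module.IsTorsionBySet R (M ⧸ N) (m : Set R) := by
      intro x a
      obtain ⟨y, rfl⟩ := Submodule.Quotient.mk_surjective N x
      rw [← Submodule.Quotient.mk_smul, Submodule.Quotient.mk_eq_zero]
      exact Submodule.smul_mem_smul a.2 trivial
    letI : Module (R ⧸ m) (M ⧸ N) := htor.module
    letI : Field (R ⧸ m) := Ideal.Quotient.field m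
    haveI : Module.Finite R (M ⧸ N) := by
      have : Module.Finite R M := ⟨IsNoetherian.noetherian ⊤⟩
      exact Module.Finite.of_surjective (N.mkQ) (Submodule.Quotient.mk_surjective N)
    haveI : Module.Finite (R ⧸ m) (M ⧸ N) :=
      Module.Finite.of_restrictScalars_finite R (R ⧸ m) (M ⧸ N)
    haveI hQa : IsArtinian (R ⧸ m) (M ⧸ N) := isArtinian_of_fg_of_artinian'
    haveI : IsArtinian R (M ⧸ N) := by
      let e : Submodule R (M ⧸ N) ↪o Submodule (R ⧸ m) (M ⧸ N) :=
        { toFun := fun p =>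
            { carrier := p
              add_mem' := fun ha hb => p.add_mem ha hb
              zero_mem' := p.zero_mem
              smul_mem' := by
                rintro c x hx
                obtain ⟨r, rfl⟩ := Ideal.Quotient.mk_surjective c
                have : (Ideal.Quotient.mk m r) • x = r • x :=
                  Module.IsTorsionBySet.mk_smul htor r x
                rw [this]
                exact p.smul_mem r hx }
          inj' := by
            intro p q hpq
            ext x
            exact SetLike.ext_iff.mp hpq x
          map_rel_iff' := Iff.rfl }
      exact ⟨(e.wellFounded hQa.wf)⟩
    exact isArtinian_of_range_eq_ker N.subtype N.mkQ
      (by rw [Submodule.range_subtype, Submodule.ker_mkQ])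

section defs
variable {R : Type*} [CommRing R]

/-- The union of all primes strictly below `m`, given total comparability and a
witness prime `a < m`. -/
def unionIdeal (m : Ideal R)
    (htot : ∀ p q : Ideal R, p.IsPrime → q.IsPrime → p ≤ q ∨ q ≤ p) : Ideal R where
  carrier := {z | ∃ p : Ideal R, p.IsPrime ∧ p < m ∧ z ∈ p} ∪ {0}
  add_mem' := by
    rintro y z (⟨p, hp, hpm, hyp⟩ | hy) (⟨q, hq, hqm, hzq⟩ | hz)
    · rcases htot p q hp hq with h | h
      · exact Or.inl ⟨q, hq, hqm, q.add_mem (h hyp) hzq⟩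
      · exact Or.inl ⟨p, hp, hpm, p.add_mem hyp (h hzq)⟩
    · simp only [Set.mem_singleton_iff] at hz
      exact Or.inl ⟨p, hp, hpm, by rw [hz, add_zero]; exact hyp⟩
    · simp only [Set.mem_singleton_iff] at hy
      exact Or.inl ⟨q, hq, hqm, by rw [hy, zero_add]; exact hzq⟩
    · simp_all
  zero_mem' := Or.inr rfl
  smul_mem' := by
    rintro c z (⟨p, hp, hpm, hzp⟩ | hz)
    · exact Or.inl ⟨p, hp, hpm, p.mul_mem_left c hzp⟩
    · simp only [Set.mem_singleton_iff] at hz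
      exact Or.inr (by simp [hz])

lemma mem_unionIdeal_iff (m : Ideal R) (htot) (z : R) :
    z ∈ unionIdeal m htot ↔ (∃ p : Ideal R, p.IsPrime ∧ p < m ∧ z ∈ p) ∨ z = 0 := Iff.rfl

/-- the symbolic power `{z | ∃ s ∉ u, s * z ∈ u ^ n}`. -/
def symbPow (u : Ideal R) (hu : u.IsPrime) (n : ℕ) : Ideal R where
  carrier := {z | ∃ s, s ∉ u ∧ s * z ∈ u ^ n}
  add_mem' := by
    rintro y z ⟨s, hs, hsy⟩ ⟨t, ht, htz⟩
    refine ⟨s * t, fun hst => (hu.mem_or_mem hst).elim hs ht, ?_⟩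
    have : s * t * (y + z) = t * (s * y) + s * (t * z) := by ring
    rw [this]
    exact Ideal.add_mem _ (Ideal.mul_mem_left _ _ hsy) (Ideal.mul_mem_left _ _ htz)
  zero_mem' := ⟨1, fun h => hu.ne_top (Ideal.eq_top_of_isUnit_mem u h isUnit_one),
    by rw [mul_zero]; exact Ideal.zero_mem _⟩
  smul_mem' := by
    rintro c z ⟨s, hs, hsz⟩
    refine ⟨s, hs, ?_⟩
    have : s * (c • z) = c * (s * z) := by simp only [smul_eq_mul]; ring
    rw [this]
    exact Ideal.mul_mem_left _ _ hsz

lemma mem_symbPow {u : Ideal R} {hu : u.IsPrime} {n : ℕ} {z : R} :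
    z ∈ symbPow u hu n ↔ ∃ s, s ∉ u ∧ s * z ∈ u ^ n := Iff.rfl

lemma symbPow_anti {u : Ideal R} (hu : u.IsPrime) (n : ℕ) :
    symbPow u hu (n + 1) ≤ symbPow u hu n := by
  rintro z ⟨s, hs, hsz⟩
  exact ⟨s, hs, Ideal.pow_le_pow_right (Nat.le_succ n) hsz⟩

lemma pow_le_symbPow {u : Ideal R} (hu : u.IsPrime) (n : ℕ) : u ^ n ≤ symbPow u hu n :=
  fun z hz => ⟨1, fun h => hu.ne_top (Ideal.eq_top_of_isUnit_mem u h isUnit_one),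
    by rwa [one_mul]⟩

end defs

/-- In a Noetherian domain whose primes are totally ordered, there is no chain
`⊥ < a < b` of primes. -/
lemma noChain {R : Type*} [CommRing R] [IsDomain R] [IsNoetherianRing R]
    {a b : Ideal R} (ha : a.IsPrime) (hb : b.IsPrime) (ha0 : a ≠ ⊥) (hab : a < b)
    (htot : ∀ p q : Ideal R, p.IsPrime → q.IsPrime → p ≤ q ∨ q ≤ p) : False := by
  classical
  obtain ⟨m, hm, hbm⟩ := Ideal.exists_le_maximal b hb.ne_top
  have ham : a < m := lt_of_lt_of_le hab hbm
  set u : Ideal R := unionIdeal m htot with hu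
  have hup : u.IsPrime := by
    constructor
    · intro htop
      have : (1 : R) ∈ u := htop ▸ Submodule.mem_top
      rcases (mem_unionIdeal_iff m htot 1).mp this with ⟨p, hp, _, h1⟩ | h1
      · exact hp.ne_top (Ideal.eq_top_of_isUnit_mem p h1 isUnit_one)
      · exact one_ne_zero h1
    · rintro x y hxy
      rcases (mem_unionIdeal_iff m htot _).mp hxy with ⟨p, hp, hpm, hxyp⟩ | h0
      · rcases hp.mem_or_mem hxyp with h | h
        · exact Or.inl (Or.inl ⟨p, hp, hpm, h⟩)
        · exact Or.inr (Or.inl ⟨p, hp, hpm, h⟩)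
      · rcases mul_eq_zero.mp h0 with h | h
        · exact Or.inl (Or.inr h)
        · exact Or.inr (Or.inr h)
  have hau : a ≤ u := fun z hz => Or.inl ⟨a, ha, ham, hz⟩
  have hum : u < m := by
    refine lt_of_le_of_ne (fun z hz => ?_) ?_
    · rcases hz with ⟨p, _, hpm, hzp⟩ | h0
      · exact hpm.le hzp
      · simp only [Set.mem_singleton_iff] at h0
        rw [h0]; exact m.zero_mem
    · intro hue
      obtain ⟨T, hT⟩ := (IsNoetherian.noetherian m : m.FG)
      have key : ∀ T : Finset R, (∀ t ∈ T, (t : R) ∈ u) →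
          ∃ p : Ideal R, p.IsPrime ∧ p < m ∧ ∀ t ∈ T, t ∈ p := by
        intro T
        induction T using Finset.induction with
        | empty => exact fun _ => ⟨a, ha, ham, fun t ht => absurd ht (Finset.notMem_empty t)⟩
        | @insert x T hx ihT =>
          intro hall
          obtain ⟨p, hp, hpm, hTp⟩ := ihT fun t ht => hall t (Finset.mem_insert_of_mem ht)
          rcases hall x (Finset.mem_insert_self x T) with ⟨q, hq, hqm, hxq⟩ | h0
          · rcases htot p q hp hq with h | h
            · exact ⟨q, hq, hqm, fun t ht => by
                rcases Finset.mem_insert.mp ht with rfl | ht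
                · exact hxq
                · exact h (hTp t ht)⟩
            · exact ⟨p, hp, hpm, fun t ht => by
                rcases Finset.mem_insert.mp ht with rfl | ht
                · exact h hxq
                · exact hTp t ht⟩
          · exact ⟨p, hp, hpm, fun t ht => by
              rcases Finset.mem_insert.mp ht with rfl | ht
              · rw [h0]; exact p.zero_mem
              · exact hTp t ht⟩
      obtain ⟨p, hp, hpm, hTp⟩ := key T fun t ht => by
        rw [hu]
        have : (t : R) ∈ m := by rw [← hT]; exact Submodule.subset_span (by simpa using ht)
        rw [← hue] at this
        exact this
      have : m ≤ p := by
        rw [← hT, Submodule.span_le]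
        intro z hz
        exact hTp z (by simpa using hz)
      exact absurd (lt_of_le_of_lt this hpm) (lt_irrefl m)
  obtain ⟨x, hxm, hxu⟩ := SetLike.exists_of_lt hum
  have huniq : ∀ J : Ideal R, J.IsMaximal → J = m := by
    intro J hJ
    rcases htot J m hJ.isPrime hm.isPrime with h | h
    · exact hJ.eq_of_le hm.ne_top h
    · exact (hm.eq_of_le hJ.ne_top h).symm
  have hradm : ∀ p : Ideal R, p.IsPrime → x ∈ p → p = m := by
    intro p hp hxp
    rcases htot p m hp hm.isPrime with h | h
    · rcases lt_or_eq_of_le h with h' | h'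
      · exact absurd (Or.inl ⟨p, hp, h', hxp⟩ :
          (∃ q : Ideal R, q.IsPrime ∧ q < m ∧ x ∈ q) ∨ x = 0) (by
            rw [hu] at hxu
            exact fun hc => hxu hc)
      · exact h'
    · exact (hm.eq_of_le hp.ne_top h).symm
  have hrad : (Ideal.span {x}).radical = m := by
    rw [Ideal.radical_eq_sInf]
    apply le_antisymm
    · exact sInf_le ⟨by rwa [Ideal.span_le, Set.singleton_subset_iff], hm.isPrime⟩
    · refine le_sInf ?_
      rintro p ⟨hsp, hp⟩
      exact (hradm p hp (hsp (Ideal.subset_span rfl))).ge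
  have hxjac : Ideal.span {x} ≤ Ideal.jacobson ⊥ := by
    rw [Ideal.span_le, Set.singleton_subset_iff]
    show x ∈ Ideal.jacobson ⊥
    rw [Ideal.jacobson]
    refine Submodule.mem_sInf.mpr ?_
    rintro J ⟨-, hJ⟩
    exact (huniq J hJ) ▸ hxm
  obtain ⟨k, hk⟩ : ∃ k, m ^ k ≤ Ideal.span {x} :=
    Ideal.exists_pow_le_of_le_radical_of_fg hrad.ge (IsNoetherian.noetherian m)
  set Q : ℕ → Ideal R := symbPow u hup with hQ
  -- stabilization via Artinian quotient
  haveI : IsArtinian R (R ⧸ Ideal.span {x}) := by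
    refine artinianAux hm k (R ⧸ Ideal.span {x}) ?_
    refine le_antisymm ?_ bot_le
    refine Submodule.smul_le.2 fun r hr z _ => ?_
    obtain ⟨w, rfl⟩ := Submodule.Quotient.mk_surjective _ z
    rw [Submodule.mem_bot, ← Submodule.Quotient.mk_smul, Submodule.Quotient.mk_eq_zero]
    exact Ideal.mul_mem_right w _ (hk hr)
  have hQanti' : ∀ i j, i ≤ j → Q j ≤ Q i := by
    intro i j hij
    induction hij with
    | refl => exact le_refl _
    | step _ ih => exact le_trans (symbPow_anti hup _) ih
  obtain ⟨n, hn⟩ := IsArtinian.monotone_stabilizes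
    (⟨fun n => OrderDual.toDual
        (Submodule.map (Ideal.span {x} : Ideal R).mkQ (Q n ⊔ Ideal.span {x})),
      fun i j hij => Submodule.map_mono (sup_le_sup_right (hQanti' i j hij) _)⟩ :
        ℕ →o (Submodule R (R ⧸ Ideal.span {x}))ᵒᵈ)
  have hDn : Q n ⊔ Ideal.span {x} = Q (n + 1) ⊔ Ideal.span {x} := by
    have h1 : Submodule.map (Ideal.span {x} : Ideal R).mkQ (Q n ⊔ Ideal.span {x})
        = Submodule.map (Ideal.span {x} : Ideal R).mkQ (Q (n + 1) ⊔ Ideal.span {x}) :=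
      hn (n + 1) (Nat.le_succ n)
    have h2 := congrArg (Submodule.comap (Ideal.span {x} : Ideal R).mkQ) h1
    rw [Submodule.comap_map_mkQ, Submodule.comap_map_mkQ] at h2
    have e1 : (Ideal.span {x} : Ideal R) ⊔ (Q n ⊔ Ideal.span {x}) = Q n ⊔ Ideal.span {x} := by
      rw [sup_comm, sup_assoc, sup_idem]
    have e2 : (Ideal.span {x} : Ideal R) ⊔ (Q (n + 1) ⊔ Ideal.span {x})
        = Q (n + 1) ⊔ Ideal.span {x} := by
      rw [sup_comm, sup_assoc, sup_idem]
    rwa [e1, e2] at h2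
  have hstep : Q n ≤ Q (n + 1) ⊔ (Ideal.span {x} : Ideal R) • Q n := by
    intro z hz
    have hz2 : z ∈ Q (n + 1) ⊔ Ideal.span {x} := by rw [← hDn]; exact Ideal.mem_sup_left hz
    obtain ⟨y, hy, c, hc, rfl⟩ := Submodule.mem_sup.mp hz2
    obtain ⟨r, hr⟩ := Ideal.mem_span_singleton'.mp hc
    have hrx : r * x ∈ Q n := by
      have he : r * x = y + c - y := by rw [hr]; ring
      rw [he]
      exact Ideal.sub_mem _ hz (symbPow_anti hup n hy)
    obtain ⟨s, hs, hsrx⟩ := hrx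
    have hrQ : r ∈ Q n := ⟨s * x, fun h => (hup.mem_or_mem h).elim hs hxu, by
      have he : s * x * r = s * (r * x) := by ring
      rwa [he]⟩
    refine Submodule.add_mem _ (Ideal.mem_sup_left hy) (Ideal.mem_sup_right ?_)
    rw [← hr]
    have := Submodule.smul_mem_smul (Ideal.mem_span_singleton_self x) hrQ
    simpa [smul_eq_mul, mul_comm] using this
  have hQeq : Q n = Q (n + 1) := by
    refine le_antisymm ?_ (symbPow_anti hup n)
    have hsm := Submodule.smul_le_of_le_smul_of_le_jacobson_bot
      (IsNoetherian.noetherian (Q n)) hxjac hstep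
    exact le_trans hstep (sup_le le_rfl hsm)
  -- localize at u and apply Nakayama
  haveI := hup
  have h0u : (0 : R) ∉ u.primeCompl := fun h0 => h0 u.zero_mem
  let Loc := Localization.AtPrime u
  haveI : IsDomain Loc :=
    IsLocalization.isDomain_localization (le_nonZeroDivisors_of_noZeroDivisors h0u)
  haveI : IsNoetherianRing Loc := IsLocalization.isNoetherianRing u.primeCompl Loc ‹_›
  set f := algebraMap R Loc with hf
  have hmapQ : ∀ j, (Q j).map f ≤ (u ^ j).map f := by
    intro j
    rw [Ideal.map_le_iff_le_comap]
    rintro z ⟨s, hs, hsz⟩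
    have hunit : IsUnit (f s) := IsLocalization.map_units Loc (⟨s, hs⟩ : u.primeCompl)
    obtain ⟨v, hv⟩ := hunit.exists_left_inv
    have he : f z = v * (f (s * z)) := by
      rw [_root_.map_mul, ← mul_assoc, hv, one_mul]
    show f z ∈ (u ^ j).map f
    rw [he]
    exact Ideal.mul_mem_left _ _ (Ideal.mem_map_of_mem f hsz)
  have hloceq : (u ^ n).map f = (u ^ (n + 1)).map f := by
    apply le_antisymm
    · calc (u ^ n).map f ≤ (Q n).map f := Ideal.map_mono (pow_le_symbPow hup n)
        _ = (Q (n + 1)).map f := by rw [hQeq]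
        _ ≤ (u ^ (n + 1)).map f := hmapQ (n + 1)
    · exact Ideal.map_mono (Ideal.pow_le_pow_right (Nat.le_succ n))
  have hjacLoc : u.map f ≤ Ideal.jacobson ⊥ := by
    rw [IsLocalRing.jacobson_eq_maximalIdeal ⊥ bot_ne_top]
    rw [Ideal.map_le_iff_le_comap]
    exact (Localization.AtPrime.comap_maximalIdeal (I := u)).ge
  have hbot : (u ^ n).map f = ⊥ := by
    refine Submodule.eq_bot_of_le_smul_of_le_jacobson_bot (u.map f) _
      (IsNoetherian.noetherian _) (le_of_eq ?_) hjacLoc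
    rw [Ideal.smul_eq_mul, ← _root_.Ideal.map_mul, ← pow_succ']
    exact hloceq
  obtain ⟨y, hya, hy0⟩ := Submodule.exists_mem_ne_zero_of_ne_bot ha0
  have hyu : y ∈ u := hau hya
  have hfy : f (y ^ n) = 0 := by
    have : f (y ^ n) ∈ (u ^ n).map f := Ideal.mem_map_of_mem f (Ideal.pow_mem_pow hyu n)
    rwa [hbot, Ideal.mem_bot] at this
  have hinj : Function.Injective f :=
    IsLocalization.injective Loc (le_nonZeroDivisors_of_noZeroDivisors h0u)
  have hyn : y ^ n = 0 := by
    apply hinj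
    rw [map_zero]; exact hfy
  by_cases hn0 : n = 0
  · subst hn0
    simp at hyn
  · exact hy0 (pow_eq_zero_iff hn0 |>.mp hyn)

/-- In a Noetherian domain with a chain `⊥ < a < b` of primes, there are two
incomparable primes below `b`. -/
lemma exists_incomparable_primes {R : Type*} [CommRing R] [IsDomain R] [IsNoetherianRing R]
    {a b : Ideal R} (ha : a.IsPrime) (hb : b.IsPrime) (ha0 : a ≠ ⊥) (hab : a < b)
    (htot : ∀ q q' : Ideal R, q.IsPrime → q'.IsPrime → q ≤ b → q' ≤ b → q ≤ q' ∨ q' ≤ q) :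
    False := by
  haveI := hb
  let Loc := Localization.AtPrime b
  have h0b : (0 : R) ∉ b.primeCompl := fun h0 => h0 b.zero_mem
  haveI : IsDomain Loc :=
    IsLocalization.isDomain_localization (le_nonZeroDivisors_of_noZeroDivisors h0b)
  haveI : IsNoetherianRing Loc := IsLocalization.isNoetherianRing b.primeCompl Loc ‹_›
  set f := algebraMap R Loc with hf
  -- primes of Loc biject with primes below b
  have hcomap_le : ∀ w : Ideal Loc, w.IsPrime → w.comap f ≤ b := by
    intro w hw
    intro z hz
    by_contra hzb
    have hdisj := ((IsLocalization.isPrime_iff_isPrime_disjoint b.primeCompl Loc w).mp hw).2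
    exact Set.disjoint_left.mp hdisj hzb hz
  have hmc : ∀ w : Ideal Loc, w.IsPrime → (w.comap f).map f = w := fun w hw =>
    IsLocalization.map_comap b.primeCompl Loc w
  -- primes of Loc are totally ordered
  have htotLoc : ∀ p q : Ideal Loc, p.IsPrime → q.IsPrime → p ≤ q ∨ q ≤ p := by
    intro p q hp hq
    have h1 : (p.comap f).IsPrime := hp.comap f
    have h2 : (q.comap f).IsPrime := hq.comap f
    rcases htot _ _ h1 h2 (hcomap_le p hp) (hcomap_le q hq) with h | h
    · exact Or.inl (by rw [← hmc p hp, ← hmc q hq]; exact Ideal.map_mono h)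
    · exact Or.inr (by rw [← hmc p hp, ← hmc q hq]; exact Ideal.map_mono h)
  -- the chain ⊥ < aLoc < maximalIdeal
  have hdisja : Disjoint (b.primeCompl : Set R) (a : Set R) :=
    Set.disjoint_left.mpr fun z hz hza => hz (hab.le hza)
  have haLoc : (a.map f).IsPrime :=
    IsLocalization.isPrime_of_isPrime_disjoint b.primeCompl Loc a ha hdisja
  have hcomap_a : (a.map f).comap f = a :=
    IsLocalization.comap_map_of_isPrime_disjoint b.primeCompl Loc ha hdisja
  have haLoc0 : a.map f ≠ ⊥ := by
    intro h0
    apply ha0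
    have := congrArg (Ideal.comap f) h0
    rw [hcomap_a] at this
    rw [this]
    refine le_antisymm ?_ bot_le
    intro z hz
    have hinj : Function.Injective f :=
      IsLocalization.injective Loc (le_nonZeroDivisors_of_noZeroDivisors h0b)
    have : f z = 0 := by simpa [Ideal.mem_comap] using hz
    simpa using hinj (by rw [this, map_zero])
  have haltm : a.map f < IsLocalRing.maximalIdeal Loc := by
    refine lt_of_le_of_ne (IsLocalRing.le_maximalIdeal haLoc.ne_top) ?_
    intro he
    have := congrArg (Ideal.comap f) he
    rw [hcomap_a] at this
    exact hab.ne (this.trans (Localization.AtPrime.comap_maximalIdeal (I := b)))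
  exact noChain haLoc (IsLocalRing.maximalIdeal.isMaximal Loc).isPrime haLoc0 haltm htotLoc

/-- Key fiber lemma: a chain of three primes of a finite type `D`-algebra lying over the
same prime `P` of `D` produces two incomparable primes between the bottom and the top. -/
lemma fiber_incomparable {D A : Type*} [CommRing D] [CommRing A] [Algebra D A]
    (hft : Algebra.FiniteType D A) {P : Ideal D} (hP : P.IsPrime)
    {p₁ p₂ p₃ : Ideal A} (h1 : p₁.IsPrime) (h2 : p₂.IsPrime) (h3 : p₃.IsPrime)
    (c1 : p₁.comap (algebraMap D A) = P) (c2 : p₂.comap (algebraMap D A) = P)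
    (c3 : p₃.comap (algebraMap D A) = P) (l12 : p₁ < p₂) (l23 : p₂ < p₃) :
    ∃ q q' : Ideal A, q.IsPrime ∧ q'.IsPrime ∧ p₁ ≤ q ∧ p₁ ≤ q' ∧ q ≤ p₃ ∧ q' ≤ p₃ ∧
      ¬ q ≤ q' ∧ ¬ q' ≤ q := by
  classical
  haveI := hP
  haveI := h1
  set mk : A →+* A ⧸ p₁ := Ideal.Quotient.mk p₁ with hmk
  set χ : D →+* A ⧸ p₁ := mk.comp (algebraMap D A) with hχ
  have hker : ∀ d : D, χ d = 0 ↔ d ∈ P := by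
    intro d
    rw [hχ, RingHom.comp_apply, hmk]
    rw [Ideal.Quotient.eq_zero_iff_mem, ← c1, Ideal.mem_comap]
  set T : Submonoid (A ⧸ p₁) := P.primeCompl.map χ.toMonoidHom with hT
  set G := Localization T with hG
  set g : (A ⧸ p₁) →+* G := algebraMap (A ⧸ p₁) G with hg
  set ρ : A →+* G := g.comp mk with hρ
  have h0T : (0 : A ⧸ p₁) ∉ T := by
    rintro ⟨d, hd, hd0⟩
    exact hd ((hker d).mp hd0)
  haveI : IsDomain G :=
    IsLocalization.isDomain_localization (le_nonZeroDivisors_of_noZeroDivisors h0T)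
  have ginj : Function.Injective g :=
    IsLocalization.injective G (le_nonZeroDivisors_of_noZeroDivisors h0T)
  set χ' : (D ⧸ P) →+* A ⧸ p₁ := Ideal.Quotient.lift P χ (fun d hd => (hker d).mpr hd) with hχ'
  set θ : (D ⧸ P) →+* G := g.comp χ' with hθ
  have θunit : ∀ z : D ⧸ P, z ≠ 0 → IsUnit (θ z) := by
    intro z hz
    obtain ⟨d, rfl⟩ := Ideal.Quotient.mk_surjective z
    have hd : d ∉ P := fun h => hz (Ideal.Quotient.eq_zero_iff_mem.mpr h)
    have h1' : θ (Ideal.Quotient.mk P d) = g (χ d) := by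
      rw [hθ, RingHom.comp_apply, hχ', Ideal.Quotient.lift_mk]
    rw [h1']
    exact IsLocalization.map_units G (⟨χ d, ⟨d, hd, rfl⟩⟩ : T)
  set κ := FractionRing (D ⧸ P) with hκ
  set lm : κ →+* G := IsLocalization.lift
    (M := nonZeroDivisors (D ⧸ P)) (g := θ)
    (fun y => θunit y.1 (nonZeroDivisors.ne_zero y.2)) with hlm
  letI : Algebra κ G := lm.toAlgebra
  have halg : algebraMap κ G = lm := rfl
  have hgχ : ∀ d : D, g (χ d)
      = algebraMap κ G (algebraMap (D ⧸ P) κ (Ideal.Quotient.mk P d)) := by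
    intro d
    rw [halg, hlm, IsLocalization.lift_eq]
    show g (χ d) = g (χ' (Ideal.Quotient.mk P d))
    exact congrArg g (Ideal.Quotient.lift_mk P χ _).symm
  -- G is a finite type κ-algebra
  obtain ⟨sA, hsA⟩ := hft.out
  set Z := Algebra.adjoin κ (↑(sA.image ρ) : Set G) with hZ
  have hZρ : ∀ x : A, ρ x ∈ Z := by
    intro x
    have hx : x ∈ Algebra.adjoin D (↑sA : Set A) := by rw [hsA]; trivial
    refine Algebra.adjoin_induction (fun y hy => ?_) (fun d => ?_)
      (fun u v _ _ hu hv => ?_) (fun u v _ _ hu hv => ?_) hx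
    · exact Algebra.subset_adjoin (by
        simp only [Finset.coe_image, Set.mem_image, Finset.mem_coe]
        exact ⟨y, hy, rfl⟩)
    · have : ρ (algebraMap D A d)
          = algebraMap κ G (algebraMap (D ⧸ P) κ (Ideal.Quotient.mk P d)) := by
        rw [hρ, RingHom.comp_apply, ← hgχ d]
        rfl
      rw [this]
      exact Z.algebraMap_mem _
    · rw [_root_.map_add]; exact Z.add_mem hu hv
    · rw [_root_.map_mul]; exact Z.mul_mem hu hv
  have htopZ : ∀ x : G, x ∈ Z := by
    intro x
    obtain ⟨⟨y, t⟩, hyt⟩ := IsLocalization.surj T x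
    obtain ⟨d, hd, hdt⟩ := t.2
    have hd0 : (Ideal.Quotient.mk P d : D ⧸ P) ≠ 0 :=
      fun h => hd (Ideal.Quotient.eq_zero_iff_mem.mp h)
    have hκ0 : algebraMap (D ⧸ P) κ (Ideal.Quotient.mk P d) ≠ 0 := fun h =>
      hd0 (IsFractionRing.injective (D ⧸ P) κ (by rw [h, map_zero]))
    set e : G := algebraMap κ G (algebraMap (D ⧸ P) κ (Ideal.Quotient.mk P d))⁻¹ with he'
    have he : g t.1 * e = 1 := by
      have hdt' : g t.1 = g (χ d) := by rw [← hdt]; rfl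
      rw [hdt', hgχ d, he', ← _root_.map_mul, mul_inv_cancel₀ hκ0, map_one]
    obtain ⟨w, hw⟩ := Ideal.Quotient.mk_surjective y
    have hx : x = ρ w * e := by
      have h' : x * (g t.1 * e) = g y * e := by
        rw [← mul_assoc, hyt]
      rw [he, mul_one] at h'
      rw [h', ← hw]
      rfl
    rw [hx]
    exact Z.mul_mem (hZρ w) (Z.algebraMap_mem _)
  have hFT : Algebra.FiniteType κ G :=
    ⟨⟨sA.image ρ, eq_top_iff.mpr fun x _ => htopZ x⟩⟩
  haveI := hFT
  haveI : IsNoetherianRing G := Algebra.FiniteType.isNoetherianRing κ G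
  -- transfer the primes p₂ p₃ to G
  have hker_mk : RingHom.ker mk = p₁ := Ideal.mk_ker
  have hmksurj : Function.Surjective mk := Ideal.Quotient.mk_surjective
  have hmap_prime : ∀ (p : Ideal A), p.IsPrime → p₁ ≤ p → (p.map mk).IsPrime := by
    intro p hp hle
    exact Ideal.map_isPrime_of_surjective hmksurj (by rwa [hker_mk])
  have hcomap_map : ∀ (p : Ideal A), p₁ ≤ p → (p.map mk).comap mk = p := by
    intro p hle
    rw [Ideal.comap_map_of_surjective mk hmksurj, ← RingHom.ker_eq_comap_bot, hker_mk]
    exact sup_eq_left.mpr hle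
  have hdisj : ∀ (p : Ideal A), p.IsPrime → p₁ ≤ p → p.comap (algebraMap D A) = P →
      Disjoint (T : Set (A ⧸ p₁)) ((p.map mk) : Set (A ⧸ p₁)) := by
    intro p hp hle hc
    rw [Set.disjoint_left]
    rintro z ⟨d, hd, rfl⟩ hzp
    have : (algebraMap D A d) ∈ (p.map mk).comap mk := hzp
    rw [hcomap_map p hle] at this
    exact hd (hc ▸ (Ideal.mem_comap.mpr this))
  have hp2' := hmap_prime p₂ h2 l12.le
  have hp3' := hmap_prime p₃ h3 (le_trans l12.le l23.le)
  have hdisj2 := hdisj p₂ h2 l12.le c2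
  have hdisj3 := hdisj p₃ h3 (le_trans l12.le l23.le) c3
  set g₂ : Ideal G := (p₂.map mk).map g with hg₂
  set g₃ : Ideal G := (p₃.map mk).map g with hg₃
  have hg2p : g₂.IsPrime := IsLocalization.isPrime_of_isPrime_disjoint T G _ hp2' hdisj2
  have hg3p : g₃.IsPrime := IsLocalization.isPrime_of_isPrime_disjoint T G _ hp3' hdisj3
  have hcg2 : g₂.comap g = p₂.map mk :=
    IsLocalization.comap_map_of_isPrime_disjoint T G hp2' hdisj2
  have hcg3 : g₃.comap g = p₃.map mk :=
    IsLocalization.comap_map_of_isPrime_disjoint T G hp3' hdisj3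
  have hsplit : ∀ v : Ideal G, v.comap ρ = (v.comap g).comap mk := fun v =>
    SetLike.ext fun z => Iff.rfl
  have hcρ2 : g₂.comap ρ = p₂ := by
    rw [hsplit, hcg2, hcomap_map p₂ l12.le]
  have hcρ3 : g₃.comap ρ = p₃ := by
    rw [hsplit, hcg3, hcomap_map p₃ (le_trans l12.le l23.le)]
  have hkρ : RingHom.ker ρ = p₁ := by
    ext z
    rw [RingHom.mem_ker, hρ, RingHom.comp_apply]
    constructor
    · intro h
      have hz : mk z = 0 := ginj (by rw [h, map_zero])
      rwa [hmk, Ideal.Quotient.eq_zero_iff_mem] at hz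
    · intro h
      have hz : mk z = 0 := by rw [hmk, Ideal.Quotient.eq_zero_iff_mem]; exact h
      rw [hz, map_zero]
  have hg20 : g₂ ≠ ⊥ := by
    intro h0
    have he : p₂ = RingHom.ker ρ := by rw [← hcρ2, h0, RingHom.ker_eq_comap_bot]
    rw [hkρ] at he
    exact l12.ne' he
  have hg23 : g₂ < g₃ := by
    refine lt_of_le_of_ne (Ideal.map_mono (Ideal.map_mono l23.le)) ?_
    intro he
    exact l23.ne (by rw [← hcρ2, ← hcρ3, he])
  by_contra hgoal
  have reflect : ∀ (v v' : Ideal G), v.comap ρ ≤ v'.comap ρ → v ≤ v' := by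
    intro v v' hle
    rw [hsplit, hsplit] at hle
    have h' : v.comap g ≤ v'.comap g :=
      (Ideal.comap_le_comap_iff_of_surjective mk hmksurj _ _).mp hle
    calc v = (v.comap g).map g := (IsLocalization.map_comap T G v).symm
      _ ≤ (v'.comap g).map g := Ideal.map_mono h'
      _ = v' := IsLocalization.map_comap T G v'
  have htot' : ∀ w w' : Ideal G, w.IsPrime → w'.IsPrime → w ≤ g₃ → w' ≤ g₃ →
      w ≤ w' ∨ w' ≤ w := by
    intro w w' hw hw' hwle hw'le
    have hqp : (w.comap ρ).IsPrime := hw.comap ρ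
    have hq'p : (w'.comap ρ).IsPrime := hw'.comap ρ
    have h1q : p₁ ≤ w.comap ρ := by
      have h := Ideal.ker_le_comap (K := w) ρ
      rwa [hkρ] at h
    have h1q' : p₁ ≤ w'.comap ρ := by
      have h := Ideal.ker_le_comap (K := w') ρ
      rwa [hkρ] at h
    have hq3 : w.comap ρ ≤ p₃ := by rw [← hcρ3]; exact Ideal.comap_mono hwle
    have hq'3 : w'.comap ρ ≤ p₃ := by rw [← hcρ3]; exact Ideal.comap_mono hw'le
    by_cases hqq : w.comap ρ ≤ w'.comap ρ
    · exact Or.inl (reflect w w' hqq)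
    by_cases hq'q : w'.comap ρ ≤ w.comap ρ
    · exact Or.inr (reflect w' w hq'q)
    exact absurd ⟨w.comap ρ, w'.comap ρ, hqp, hq'p, h1q, h1q', hq3, hq'3, hqq, hq'q⟩ hgoal
  exact (exists_incomparable_primes hg2p hg3p hg20 hg23 htot').elim

theorem stmt7 (D K : Type*) [CommRing D] [IsDomain D] [Field K] [Algebra D K]
    [IsFractionRing D K] (V : ValuationSubring K) (hDV : ∀ d : D, algebraMap D K d ∈ V)
    (s : Finset K) (M : Ideal (Algebra.adjoin D (s : Set K))) (hM : M.IsMaximal)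
    -- `B` is the localization `D[x₁,…,xₙ]_M` of the finitely generated algebra
    -- `A = D[x₁,…,xₙ] = Algebra.adjoin D s` at the maximal ideal `M`, inside `K`:
    (B : Subring K)
    (hB : ∀ z : K, z ∈ B ↔
      ∃ a t : Algebra.adjoin D (s : Set K), t ∉ M ∧ z * (t : K) = (a : K))
    -- `V` contains `B` and is integral over `B`:
    (hBV : B ≤ V.toSubring)
    (hint : ∀ x : K, x ∈ V → IsIntegral B x) :
    -- then at most two primes of `V` lie over any prime `P` of `D`:
    ∀ P : Ideal D, P.IsPrime →
      ∀ Q₁ Q₂ Q₃ : Ideal V.toSubring, Q₁.IsPrime → Q₂.IsPrime → Q₃.IsPrime →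
        Q₁.comap ((algebraMap D K).codRestrict V.toSubring hDV) = P →
        Q₂.comap ((algebraMap D K).codRestrict V.toSubring hDV) = P →
        Q₃.comap ((algebraMap D K).codRestrict V.toSubring hDV) = P →
        Q₁ = Q₂ ∨ Q₁ = Q₃ ∨ Q₂ = Q₃ := by
  classical
  intro P hP Q₁ Q₂ Q₃ h₁ h₂ h₃ e₁ e₂ e₃
  haveI := hM.isPrime
  let A : Subalgebra D K := Algebra.adjoin D (s : Set K)
  have hM1 : (1 : A) ∉ M := (Ideal.ne_top_iff_one M).mp hM.ne_top
  have hAB : ∀ a : A, (a : K) ∈ B := fun a =>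
    (hB a).mpr ⟨a, 1, hM1, by rw [OneMemClass.coe_one, mul_one]⟩
  -- the canonical maps
  set ψ : A →+* B :=
    { toFun := fun a => (⟨(a : K), hAB a⟩ : B)
      map_one' := rfl
      map_mul' := fun a b => rfl
      map_zero' := rfl
      map_add' := fun a b => rfl } with hψ
  set φD : D →+* B := ψ.comp (algebraMap D A) with hφD
  set incl : B →+* V.toSubring := Subring.inclusion hBV with hincl
  have hcodres : (algebraMap D K).codRestrict V.toSubring hDV = incl.comp φD :=
    RingHom.ext fun d => rfl
  -- B is the localization of A at M
  letI : Algebra A B := ψ.toAlgebra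
  have halgψ : (algebraMap A B) = ψ := rfl
  haveI hloc : IsLocalization M.primeCompl B := by
    refine ⟨⟨?_, ?_, ?_⟩⟩
    · intro y
      have hy : (y : A) ∉ M := y.2
      have hy0 : ((y : A) : K) ≠ 0 := by
        intro h0
        apply hy
        have : (y : A) = 0 := by
          ext
          exact h0
        rw [this]
        exact M.zero_mem
      have hinv : ((y : A) : K)⁻¹ ∈ B :=
        (hB _).mpr ⟨1, (y : A), hy, by rw [inv_mul_cancel₀ hy0, OneMemClass.coe_one]⟩
      refine isUnit_iff_exists_inv.mpr ⟨⟨_, hinv⟩, ?_⟩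
      ext
      exact mul_inv_cancel₀ hy0
    · intro z
      obtain ⟨a, t, ht, hzt⟩ := (hB z).mp z.2
      refine ⟨(a, ⟨t, ht⟩), ?_⟩
      ext
      exact hzt
    · intro a b h
      refine ⟨1, ?_⟩
      have h' : ψ a = ψ b := h
      have hab : a = b := by
        ext
        have h'' := Subtype.ext_iff.mp h'
        exact h''
      rw [hab]
  -- V is a valuation ring
  letI : ValuationRing V.toSubring := inferInstanceAs (ValuationRing V)
  have htotV : ∀ I J : Ideal V.toSubring, I ≤ J ∨ J ≤ I := fun I J => Std.Total.total I J
  -- V is integral over B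
  letI : Algebra B V.toSubring := incl.toAlgebra
  haveI hVint : Algebra.IsIntegral B V.toSubring := by
    constructor
    intro x
    obtain ⟨p, pm, hp⟩ := hint x.1 x.2
    refine ⟨p, pm, ?_⟩
    have hcomp : (V.toSubring.subtype).comp (algebraMap B V.toSubring) = algebraMap B K :=
      RingHom.ext fun b => rfl
    apply Subtype.coe_injective
    have := Polynomial.hom_eval₂ p (algebraMap B V.toSubring) V.toSubring.subtype x
    rw [hcomp] at this
    show (V.toSubring.subtype) (Polynomial.eval₂ (algebraMap B V.toSubring) x p) = (0 : K)
    rw [this]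
    exact hp
  -- the key step: no strict chain of three primes over P
  have key : ∀ X Y Z : Ideal V.toSubring, X.IsPrime → Y.IsPrime → Z.IsPrime →
      X.comap ((algebraMap D K).codRestrict V.toSubring hDV) = P →
      Y.comap ((algebraMap D K).codRestrict V.toSubring hDV) = P →
      Z.comap ((algebraMap D K).codRestrict V.toSubring hDV) = P →
      X < Y → Y < Z → False := by
    intro X Y Z hX hY hZ eX eY eZ lXY lYZ
    -- contract to B
    have hcltB : ∀ (I J : Ideal V.toSubring), I.IsPrime → I < J →
        I.comap (algebraMap B V.toSubring) < J.comap (algebraMap B V.toSubring) := by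
      intro I J hI hIJ
      haveI := hI
      obtain ⟨x, hxJ, hxI⟩ := SetLike.exists_of_lt hIJ
      exact Ideal.comap_lt_comap_of_integral_mem_sdiff hIJ.le ⟨hxJ, hxI⟩
        (Algebra.IsIntegral.isIntegral x)
    have lB12 : X.comap incl < Y.comap incl := hcltB X Y hX lXY
    have lB23 : Y.comap incl < Z.comap incl := hcltB Y Z hY lYZ
    have hcB : ∀ (W : Ideal V.toSubring),
        W.comap ((algebraMap D K).codRestrict V.toSubring hDV) = P →
        (W.comap incl).comap φD = P := by
      intro W hW
      rw [Ideal.comap_comap, ← hcodres]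
      exact hW
    -- contract to A
    have hcA : ∀ (W : Ideal V.toSubring),
        W.comap ((algebraMap D K).codRestrict V.toSubring hDV) = P →
        ((W.comap incl).comap ψ).comap (algebraMap D A) = P := by
      intro W hW
      rw [Ideal.comap_comap, ← hφD]
      exact hcB W hW
    have hmapcomap : ∀ (J : Ideal B), (J.comap ψ).map ψ = J := fun J =>
      IsLocalization.map_comap M.primeCompl B J
    have hcltA : ∀ (I J : Ideal B), I < J → I.comap ψ < J.comap ψ := by
      intro I J hIJ
      refine lt_of_le_of_ne (Ideal.comap_mono hIJ.le) ?_
      intro he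
      apply hIJ.ne
      rw [← hmapcomap I, ← hmapcomap J, he]
    have lA12 := hcltA _ _ lB12
    have lA23 := hcltA _ _ lB23
    -- apply the fiber lemma
    have hft : Algebra.FiniteType D A :=
      (Subalgebra.fg_iff_finiteType _).mp (Subalgebra.fg_adjoin_finset _)
    obtain ⟨q, q', hq, hq', h1q, h1q', hq3, hq'3, hnqq', hnq'q⟩ :=
      fiber_incomparable hft hP
        (((hX.comap incl)).comap ψ) ((hY.comap incl).comap ψ) ((hZ.comap incl).comap ψ)
        (hcA X eX) (hcA Y eY) (hcA Z eZ) lA12 lA23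
    -- q and q' extend to B
    have hy3M : (Z.comap incl).comap ψ ≤ M := by
      intro t ht
      by_contra htM
      have hu : IsUnit (ψ t) := IsLocalization.map_units B (⟨t, htM⟩ : M.primeCompl)
      exact ((hZ.comap incl)).ne_top (Ideal.eq_top_of_isUnit_mem _ ht hu)
    have hextend : ∀ (r : Ideal A), r.IsPrime → r ≤ (Z.comap incl).comap ψ →
        (r.map ψ).IsPrime ∧ (r.map ψ).comap ψ = r := by
      intro r hr hrle
      have hd : Disjoint (M.primeCompl : Set A) (r : Set A) :=
        Set.disjoint_left.mpr fun z hz hzr => hz (hy3M (hrle hzr))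
      exact ⟨IsLocalization.isPrime_of_isPrime_disjoint M.primeCompl B r hr hd,
        IsLocalization.comap_map_of_isPrime_disjoint M.primeCompl B hr hd⟩
    obtain ⟨hqB, hqBc⟩ := hextend q hq hq3
    obtain ⟨hq'B, hq'Bc⟩ := hextend q' hq' hq'3
    have hX1q : X.comap incl ≤ q.map ψ := by
      have : X.comap incl = ((X.comap incl).comap ψ).map ψ := (hmapcomap _).symm
      rw [this]
      exact Ideal.map_mono h1q
    have hX1q' : X.comap incl ≤ q'.map ψ := by
      have : X.comap incl = ((X.comap incl).comap ψ).map ψ := (hmapcomap _).symm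
      rw [this]
      exact Ideal.map_mono h1q'
    -- going up in V
    haveI := hqB
    haveI := hq'B
    haveI := hX
    obtain ⟨W, hXW, hWp, hWc⟩ :=
      Ideal.exists_ideal_over_prime_of_isIntegral (q.map ψ) X hX1q
    obtain ⟨W', hXW', hW'p, hW'c⟩ :=
      Ideal.exists_ideal_over_prime_of_isIntegral (q'.map ψ) X hX1q'
    rcases htotV W W' with h | h
    · apply hnqq'
      rw [← hqBc, ← hq'Bc, ← hWc, ← hW'c]
      exact Ideal.comap_mono (Ideal.comap_mono h)
    · apply hnq'q
      rw [← hqBc, ← hq'Bc, ← hWc, ← hW'c]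
      exact Ideal.comap_mono (Ideal.comap_mono h)
  -- case analysis on the total order
  by_contra hne
  push_neg at hne
  obtain ⟨n12, n13, n23⟩ := hne
  have d12 : Q₁ < Q₂ ∨ Q₂ < Q₁ := by
    rcases htotV Q₁ Q₂ with h | h
    · exact Or.inl (h.lt_of_ne n12)
    · exact Or.inr (h.lt_of_ne (Ne.symm n12))
  have d13 : Q₁ < Q₃ ∨ Q₃ < Q₁ := by
    rcases htotV Q₁ Q₃ with h | h
    · exact Or.inl (h.lt_of_ne n13)
    · exact Or.inr (h.lt_of_ne (Ne.symm n13))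
  have d23 : Q₂ < Q₃ ∨ Q₃ < Q₂ := by
    rcases htotV Q₂ Q₃ with h | h
    · exact Or.inl (h.lt_of_ne n23)
    · exact Or.inr (h.lt_of_ne (Ne.symm n23))
  rcases d12 with h12 | h21 <;> rcases d13 with h13 | h31 <;> rcases d23 with h23 | h32
  · exact key Q₁ Q₂ Q₃ h₁ h₂ h₃ e₁ e₂ e₃ h12 h23
  · exact key Q₁ Q₃ Q₂ h₁ h₃ h₂ e₁ e₃ e₂ h13 h32
  · exact absurd (lt_trans (lt_trans h31 h12) h23) (lt_irrefl Q₃)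
  · exact key Q₃ Q₁ Q₂ h₃ h₁ h₂ e₃ e₁ e₂ h31 h12
  · exact key Q₂ Q₁ Q₃ h₂ h₁ h₃ e₂ e₁ e₃ h21 h13
  · exact absurd (lt_trans (lt_trans h13 h32) h21) (lt_irrefl Q₁)
  · exact key Q₂ Q₃ Q₁ h₂ h₃ h₁ e₂ e₃ e₁ h23 h31
  · exact key Q₃ Q₂ Q₁ h₃ h₂ h₁ e₃ e₂ e₁ h32 h21
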